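/- Assume u^{k−1} : 𝒯 → [0,∞)ⁿ satisfies Σᵢ u^{k−1}_{i,K} < 1 for every K, and let u^k : 𝒯 → 𝒪 solve one step of the implicit Euler finite-volume scheme with previous values u^{k−1}. Then the discrete entropy dissipation inequality H(u^k) + Δt · Σᵢ₌₁ⁿ Iᵢ(u^k) ≤ H(u^{k−1}) holds. -/

import Mathlib

open Real Set MeasureTheory

/-- `q(M) = (p(M)/M) ∫₀^M s^a / ((1-s)^b p(s)²) ds`. -/
noncomputable def qfun (p : ℝ → ℝ) (a b : ℝ) (M : ℝ) : ℝ :=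
  p M / M * ∫ s in (0:ℝ)..M, s ^ a / ((1 - s) ^ b * p s ^ 2)

/-- `vᵢ(u) = uᵢ q(M)/p(M)` with `M = Σⱼ uⱼ`, extended by `0` when `M = 0`. -/
noncomputable def vfun (p : ℝ → ℝ) (a b : ℝ) {n : ℕ} (u : Fin n → ℝ) (i : Fin n) : ℝ :=
  if (∑ j, u j) = 0 then 0
  else u i * qfun p a b (∑ j, u j) / p (∑ j, u j)

/-- Edge structure of a finite-volume graph: `Sum.inl K` is a Dirichlet edge at
cell `K`, `Sum.inr (K, L)` an interior edge joining `K` and `L`. -/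
abbrev EdgeEnds (T E : Type) := E → T ⊕ T × T

/-- `D_σ w = w_{K,σ} − w_K` for an edge `σ` (with the orientation of `ends`),
with exterior Dirichlet value `wD`. -/
noncomputable def edgeDiff {T E : Type} (ends : EdgeEnds T E) (w : T → ℝ) (wD : ℝ) (σ : E) : ℝ :=
  match ends σ with
  | Sum.inl K => wD - w K
  | Sum.inr KL => w KL.2 - w KL.1

/-- `D_{K,σ} w = w_{K,σ} − w_K` viewed from cell `K`, equal to `0` if `σ` is not
incident to `K`. -/
noncomputable def cellDiff {T E : Type} [DecidableEq T] (ends : EdgeEnds T E)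
    (w : T → ℝ) (wD : ℝ) (σ : E) (K : T) : ℝ :=
  match ends σ with
  | Sum.inl K' => if K' = K then wD - w K else 0
  | Sum.inr KL =>
      if KL.1 = K then w KL.2 - w K else if KL.2 = K then w KL.1 - w K else 0

/-- `(p_σ)² = (p(M_K)² + p(M_{K,σ})²)/2` on an edge `σ`, the exterior value on
Dirichlet edges being `M^D`. -/
noncomputable def pEdgeSq (p : ℝ → ℝ) {T E : Type} (ends : EdgeEnds T E)
    (Mf : T → ℝ) (MD : ℝ) (σ : E) : ℝ :=
  match ends σ with
  | Sum.inl K => (p (Mf K) ^ 2 + p MD ^ 2) / 2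
  | Sum.inr KL => (p (Mf KL.1) ^ 2 + p (Mf KL.2) ^ 2) / 2

/-- One step of the implicit Euler finite-volume scheme with unit diffusivities:
`ucur : 𝒯 → [0,∞)ⁿ` with `Σᵢ ucurᵢ < 1` on each cell, satisfying
`m(K)(u^k_{i,K} − u^{k−1}_{i,K})/Δt = Σ_σ τ_σ (p_σ^k)² D_{K,σ}(vᵢ(u^k))`. -/
def SchemeStep (p : ℝ → ℝ) (a b : ℝ) (n : ℕ) {T E : Type}
    [Fintype T] [Fintype E] [DecidableEq T] (ends : EdgeEnds T E)
    (m : T → ℝ) (τ : E → ℝ) (uD : Fin n → ℝ) (Δt : ℝ)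
    (uprev ucur : T → Fin n → ℝ) : Prop :=
  (∀ K i, 0 ≤ ucur K i) ∧ (∀ K, ∑ i, ucur K i < 1) ∧
  ∀ K i, m K * (ucur K i - uprev K i) / Δt =
    ∑ σ : E, τ σ * pEdgeSq p ends (fun L => ∑ j, ucur L j) (∑ j, uD j) σ *
      cellDiff ends (fun L => vfun p a b (ucur L) i) (vfun p a b uD i) σ K

/-- Entropy density `h(u)` (extended by continuity when some `uᵢ = 0`). -/
noncomputable def hent (p : ℝ → ℝ) (a b : ℝ) {n : ℕ} (u : Fin n → ℝ) : ℝ :=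
  (∑ i, (u i * (Real.log (u i) - 1) + 1)) +
    ∫ s in (0:ℝ)..(∑ i, u i), Real.log (qfun p a b s / p s)

/-- Relative entropy density `h*(u|u^D)`. -/
noncomputable def hstar (p : ℝ → ℝ) (a b : ℝ) {n : ℕ} (uD u : Fin n → ℝ) : ℝ :=
  hent p a b u - hent p a b uD -
    ∑ i, Real.log (uD i * qfun p a b (∑ j, uD j) / p (∑ j, uD j)) * (u i - uD i)

/-- Discrete relative entropy `H(u) = Σ_K m(K) h*(u_K|u^D)`. -/
noncomputable def Hent (p : ℝ → ℝ) (a b : ℝ) {n : ℕ} {T : Type} [Fintype T]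
    (m : T → ℝ) (uD : Fin n → ℝ) (u : T → Fin n → ℝ) : ℝ :=
  ∑ K, m K * hstar p a b uD (u K)

/-- Discrete entropy production `Iᵢ(u) = Σ_σ τ_σ p_σ² (D_σ √(vᵢ(u)))²`. -/
noncomputable def Iprod (p : ℝ → ℝ) (a b : ℝ) {n : ℕ} {T E : Type}
    [Fintype T] [Fintype E] (ends : EdgeEnds T E) (τ : E → ℝ)
    (uD : Fin n → ℝ) (u : T → Fin n → ℝ) (i : Fin n) : ℝ :=
  ∑ σ : E, τ σ * pEdgeSq p ends (fun L => ∑ j, u L j) (∑ j, uD j) σ *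
    (edgeDiff ends (fun L => Real.sqrt (vfun p a b (u L) i))
      (Real.sqrt (vfun p a b uD i)) σ) ^ 2

section AuxAnalysis

variable {p : ℝ → ℝ} {a b : ℝ}

/-- The integrand `s ↦ s^a / ((1-s)^b p(s)²)`. -/
noncomputable def ffun (p : ℝ → ℝ) (a b s : ℝ) : ℝ := s ^ a / ((1 - s) ^ b * p s ^ 2)

/-- The primitive `F(M) = ∫₀^M f`. -/
noncomputable def Ffun (p : ℝ → ℝ) (a b M : ℝ) : ℝ := ∫ s in (0:ℝ)..M, ffun p a b s

lemma qfun_eq_Ffun (M : ℝ) : qfun p a b M = p M / M * Ffun p a b M := rfl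

lemma ffun_pos (hppos : ∀ M ∈ Ico (0:ℝ) 1, 0 < p M) {s : ℝ} (hs : s ∈ Ioo (0:ℝ) 1) :
    0 < ffun p a b s :=
  div_pos (rpow_pos_of_pos hs.1 a)
    (mul_pos (rpow_pos_of_pos (by linarith [hs.2]) b) (pow_pos (hppos s ⟨hs.1.le, hs.2⟩) 2))

lemma ffun_cont (ha0 : 0 ≤ a) (hb0 : 0 ≤ b) (hpc : ContinuousOn p (Icc 0 1))
    (hppos : ∀ M ∈ Ico (0:ℝ) 1, 0 < p M) : ContinuousOn (ffun p a b) (Ico 0 1) := by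
  apply ContinuousOn.div
  · exact continuousOn_id.rpow_const (fun x _ => Or.inr ha0)
  · exact ((continuousOn_const.sub continuousOn_id).rpow_const (fun x _ => Or.inr hb0)).mul
      ((hpc.mono Ico_subset_Icc_self).pow 2)
  · intro s hs
    exact (mul_pos (rpow_pos_of_pos (by linarith [hs.2]) b) (pow_pos (hppos s hs) 2)).ne'

lemma ffun_mono (ha0 : 0 ≤ a) (hb0 : 0 ≤ b) (hpa : AntitoneOn p (Icc 0 1))
    (hppos : ∀ M ∈ Ico (0:ℝ) 1, 0 < p M) : MonotoneOn (ffun p a b) (Ico 0 1) := by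
  intro x hx y hy hxy
  have hpy := hppos y hy
  have h1 : x ^ a ≤ y ^ a := Real.rpow_le_rpow hx.1 hxy ha0
  have h2 : (1 - y) ^ b ≤ (1 - x) ^ b :=
    Real.rpow_le_rpow (by linarith [hy.2]) (by linarith) hb0
  have h3 : p y ^ 2 ≤ p x ^ 2 :=
    pow_le_pow_left₀ hpy.le (hpa (Ico_subset_Icc_self hx) (Ico_subset_Icc_self hy) hxy) 2
  have hdy : 0 < (1 - y) ^ b * p y ^ 2 :=
    mul_pos (rpow_pos_of_pos (by linarith [hy.2]) b) (pow_pos hpy 2)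
  exact div_le_div₀ (Real.rpow_nonneg hy.1 a) h1 hdy
    (mul_le_mul h2 h3 (pow_nonneg hpy.le 2) (Real.rpow_nonneg (by linarith [hx.2]) b))

lemma ffun_intInt (ha0 : 0 ≤ a) (hb0 : 0 ≤ b) (hpc : ContinuousOn p (Icc 0 1))
    (hppos : ∀ M ∈ Ico (0:ℝ) 1, 0 < p M) {x y : ℝ} (hx : x ∈ Ico (0:ℝ) 1)
    (hy : y ∈ Ico (0:ℝ) 1) : IntervalIntegrable (ffun p a b) volume x y := by
  apply ContinuousOn.intervalIntegrable
  apply (ffun_cont ha0 hb0 hpc hppos).mono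
  intro s hs
  exact ⟨le_trans (le_min hx.1 hy.1) hs.1, lt_of_le_of_lt hs.2 (max_lt hx.2 hy.2)⟩

lemma zero_mem_Ico : (0:ℝ) ∈ Ico (0:ℝ) 1 := ⟨le_rfl, one_pos⟩

lemma Ffun_pos (ha0 : 0 ≤ a) (hb0 : 0 ≤ b) (hpc : ContinuousOn p (Icc 0 1))
    (hppos : ∀ M ∈ Ico (0:ℝ) 1, 0 < p M) {M : ℝ} (hM : M ∈ Ioo (0:ℝ) 1) :
    0 < Ffun p a b M :=
  intervalIntegral.intervalIntegral_pos_of_pos_on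
    (ffun_intInt ha0 hb0 hpc hppos zero_mem_Ico ⟨hM.1.le, hM.2⟩)
    (fun s hs => ffun_pos hppos ⟨hs.1, hs.2.trans hM.2⟩) hM.1

lemma rfun_mono (ha0 : 0 ≤ a) (hb0 : 0 ≤ b) (hpc : ContinuousOn p (Icc 0 1))
    (hpa : AntitoneOn p (Icc 0 1)) (hppos : ∀ M ∈ Ico (0:ℝ) 1, 0 < p M)
    {x y : ℝ} (hx : x ∈ Ioo (0:ℝ) 1) (hy : y ∈ Ioo (0:ℝ) 1) (hxy : x ≤ y) :
    Ffun p a b x / x ≤ Ffun p a b y / y := by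
  have hx' : x ∈ Ico (0:ℝ) 1 := ⟨hx.1.le, hx.2⟩
  have hy' : y ∈ Ico (0:ℝ) 1 := ⟨hy.1.le, hy.2⟩
  have hFy : Ffun p a b y = Ffun p a b x + ∫ s in x..y, ffun p a b s :=
    (intervalIntegral.integral_add_adjacent_intervals
      (ffun_intInt ha0 hb0 hpc hppos zero_mem_Ico hx')
      (ffun_intInt ha0 hb0 hpc hppos hx' hy')).symm
  have h1 : Ffun p a b x ≤ x * ffun p a b x := by
    have h := intervalIntegral.integral_mono_on hx.1.le
      (ffun_intInt ha0 hb0 hpc hppos zero_mem_Ico hx') intervalIntegrable_const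
      (fun s hs => ffun_mono ha0 hb0 hpa hppos ⟨hs.1, lt_of_le_of_lt hs.2 hx.2⟩ hx' hs.2)
    simpa [intervalIntegral.integral_const, smul_eq_mul, Ffun] using h
  have h2 : (y - x) * ffun p a b x ≤ ∫ s in x..y, ffun p a b s := by
    have h := intervalIntegral.integral_mono_on hxy intervalIntegrable_const
      (ffun_intInt ha0 hb0 hpc hppos hx' hy')
      (fun s hs => ffun_mono ha0 hb0 hpa hppos hx'
        ⟨le_trans hx.1.le hs.1, lt_of_le_of_lt hs.2 hy.2⟩ hs.1)
    simpa [intervalIntegral.integral_const, smul_eq_mul] using h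
  rw [div_le_div_iff₀ hx.1 hy.1, hFy]
  nlinarith [mul_le_mul_of_nonneg_right h2 hx.1.le,
    mul_le_mul_of_nonneg_right h1 (sub_nonneg.mpr hxy)]

lemma qp_eq (hppos : ∀ M ∈ Ico (0:ℝ) 1, 0 < p M) {M : ℝ} (hM : M ∈ Ioo (0:ℝ) 1) :
    qfun p a b M / p M = Ffun p a b M / M := by
  have hp : p M ≠ 0 := (hppos M ⟨hM.1.le, hM.2⟩).ne'
  have hM0 : M ≠ 0 := hM.1.ne'
  rw [qfun_eq_Ffun]
  field_simp

lemma qfun_pos (ha0 : 0 ≤ a) (hb0 : 0 ≤ b) (hpc : ContinuousOn p (Icc 0 1))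
    (hppos : ∀ M ∈ Ico (0:ℝ) 1, 0 < p M) {M : ℝ} (hM : M ∈ Ioo (0:ℝ) 1) :
    0 < qfun p a b M := by
  rw [qfun_eq_Ffun]
  exact mul_pos (div_pos (hppos M ⟨hM.1.le, hM.2⟩) hM.1) (Ffun_pos ha0 hb0 hpc hppos hM)

/-- `g(s) = log (q(s)/p(s))`, the integrand of the entropy. -/
noncomputable def gfun (p : ℝ → ℝ) (a b s : ℝ) : ℝ := Real.log (qfun p a b s / p s)

lemma qp_pos (ha0 : 0 ≤ a) (hb0 : 0 ≤ b) (hpc : ContinuousOn p (Icc 0 1))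
    (hppos : ∀ M ∈ Ico (0:ℝ) 1, 0 < p M) {M : ℝ} (hM : M ∈ Ioo (0:ℝ) 1) :
    0 < qfun p a b M / p M :=
  div_pos (qfun_pos ha0 hb0 hpc hppos hM) (hppos M ⟨hM.1.le, hM.2⟩)

lemma gfun_mono (ha0 : 0 ≤ a) (hb0 : 0 ≤ b) (hpc : ContinuousOn p (Icc 0 1))
    (hpa : AntitoneOn p (Icc 0 1)) (hppos : ∀ M ∈ Ico (0:ℝ) 1, 0 < p M)
    {x y : ℝ} (hx : x ∈ Ioo (0:ℝ) 1) (hy : y ∈ Ioo (0:ℝ) 1) (hxy : x ≤ y) :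
    gfun p a b x ≤ gfun p a b y := by
  unfold gfun
  rw [qp_eq hppos hx, qp_eq hppos hy]
  exact Real.log_le_log (div_pos (Ffun_pos ha0 hb0 hpc hppos hx) hx.1)
    (rfun_mono ha0 hb0 hpc hpa hppos hx hy hxy)

lemma gfun_lower (ha0 : 0 ≤ a) (hb0 : 0 ≤ b) (hpc : ContinuousOn p (Icc 0 1))
    (hpa : AntitoneOn p (Icc 0 1)) (hppos : ∀ M ∈ Ico (0:ℝ) 1, 0 < p M)
    {s : ℝ} (hs : s ∈ Ioo (0:ℝ) 1) :
    a * Real.log s - Real.log ((a + 1) * p 0 ^ 2) ≤ gfun p a b s := by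
  have hp0 : 0 < p 0 := hppos 0 zero_mem_Ico
  have hC : 0 < (a + 1) * p 0 ^ 2 := mul_pos (by linarith) (pow_pos hp0 2)
  have key : s ^ a / ((a + 1) * p 0 ^ 2) ≤ Ffun p a b s / s := by
    have h1 : (∫ t in (0:ℝ)..s, t ^ a / p 0 ^ 2) ≤ Ffun p a b s := by
      apply intervalIntegral.integral_mono_on hs.1.le
        ((intervalIntegral.intervalIntegrable_rpow' (by linarith)).div_const (p 0 ^ 2))
        (ffun_intInt ha0 hb0 hpc hppos zero_mem_Ico ⟨hs.1.le, hs.2⟩)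
      intro t ht
      have ht1 : t < 1 := lt_of_le_of_lt ht.2 hs.2
      have hpt : 0 < p t := hppos t ⟨ht.1, ht1⟩
      have hd0 : 0 < (1 - t) ^ b * p t ^ 2 :=
        mul_pos (rpow_pos_of_pos (by linarith) b) (pow_pos hpt 2)
      have hd1 : (1 - t) ^ b * p t ^ 2 ≤ p 0 ^ 2 := by
        calc (1 - t) ^ b * p t ^ 2 ≤ 1 * p t ^ 2 :=
              mul_le_mul_of_nonneg_right
                (Real.rpow_le_one (by linarith [ht.2, hs.2]) (by linarith [ht.1]) hb0)
                (pow_nonneg hpt.le 2)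
          _ = p t ^ 2 := one_mul _
          _ ≤ p 0 ^ 2 := pow_le_pow_left₀ hpt.le
              (hpa ⟨le_rfl, zero_le_one⟩ ⟨ht.1, ht1.le⟩ ht.1) 2
      exact div_le_div_of_nonneg_left (Real.rpow_nonneg ht.1 a) hd0 hd1
    have h2 : (∫ t in (0:ℝ)..s, t ^ a / p 0 ^ 2) = s ^ (a + 1) / ((a + 1) * p 0 ^ 2) := by
      rw [intervalIntegral.integral_div, integral_rpow (Or.inl (by linarith))]
      rw [Real.zero_rpow (by linarith : a + 1 ≠ 0)]
      rw [div_div]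
      ring_nf
    rw [le_div_iff₀ hs.1]
    have h3 : s ^ a / ((a + 1) * p 0 ^ 2) * s = s ^ (a + 1) / ((a + 1) * p 0 ^ 2) := by
      rw [Real.rpow_add_one hs.1.ne']
      ring
    rw [h3, ← h2]
    exact h1
  have hlog := Real.log_le_log (div_pos (rpow_pos_of_pos hs.1 a) hC) key
  rw [Real.log_div (rpow_pos_of_pos hs.1 a).ne' hC.ne', Real.log_rpow hs.1] at hlog
  unfold gfun
  rw [qp_eq hppos hs]
  linarith

end AuxAnalysis
section AuxAnalysis2

variable {p : ℝ → ℝ} {a b : ℝ}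

lemma gfun_integrableOn (ha0 : 0 ≤ a) (hb0 : 0 ≤ b) (hpc : ContinuousOn p (Icc 0 1))
    (hpa : AntitoneOn p (Icc 0 1)) (hppos : ∀ M ∈ Ico (0:ℝ) 1, 0 < p M)
    {c : ℝ} (hc : c ∈ Ioo (0:ℝ) 1) : IntegrableOn (gfun p a b) (Ioc 0 c) volume := by
  have hc1 : Icc (0:ℝ) c ⊆ Ico (0:ℝ) 1 := fun s hs => ⟨hs.1, lt_of_le_of_lt hs.2 hc.2⟩
  have hFcont : ContinuousOn (Ffun p a b) (Icc 0 c) := by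
    have hint : IntegrableOn (ffun p a b) (uIcc 0 c) volume := by
      rw [uIcc_of_le hc.1.le]
      exact ((ffun_cont ha0 hb0 hpc hppos).mono hc1).integrableOn_compact isCompact_Icc
    have h := intervalIntegral.continuousOn_primitive_interval hint
    rw [uIcc_of_le hc.1.le] at h
    exact h
  have hGcont : ContinuousOn (fun s => Real.log (Ffun p a b s / s)) (Ioc 0 c) := by
    apply ContinuousOn.log
    · exact (hFcont.mono Ioc_subset_Icc_self).div continuousOn_id (fun s hs => hs.1.ne')
    · intro s hs
      exact (div_pos (Ffun_pos ha0 hb0 hpc hppos ⟨hs.1, lt_of_le_of_lt hs.2 hc.2⟩) hs.1).ne'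
  have hmeas : AEStronglyMeasurable (gfun p a b) (volume.restrict (Ioc 0 c)) := by
    apply (hGcont.aestronglyMeasurable measurableSet_Ioc).congr
    filter_upwards [ae_restrict_mem measurableSet_Ioc] with s hs
    rw [gfun, qp_eq hppos ⟨hs.1, lt_of_le_of_lt hs.2 hc.2⟩]
  have hBint : IntegrableOn (fun s : ℝ =>
      (|gfun p a b c| + |Real.log ((a + 1) * p 0 ^ 2)|) + 2 * a * s ^ (-(1/2) : ℝ))
      (Ioc 0 c) volume := by
    apply Integrable.add
    · exact integrableOn_const measure_Ioc_lt_top.ne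
    · have h1 : IntervalIntegrable (fun s : ℝ => s ^ (-(1/2) : ℝ)) volume 0 c :=
        intervalIntegral.intervalIntegrable_rpow' (by norm_num)
      exact ((intervalIntegrable_iff_integrableOn_Ioc_of_le hc.1.le).1 h1).const_mul (2 * a)
  apply Integrable.mono' hBint hmeas
  filter_upwards [ae_restrict_mem measurableSet_Ioc] with s hs
  have hs' : s ∈ Ioo (0:ℝ) 1 := ⟨hs.1, lt_of_le_of_lt hs.2 hc.2⟩
  have hub : gfun p a b s ≤ gfun p a b c := gfun_mono ha0 hb0 hpc hpa hppos hs' hc hs.2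
  have hlb := gfun_lower ha0 hb0 hpc hpa hppos hs'
  have hts : 0 < s ^ (-(1/2) : ℝ) := rpow_pos_of_pos hs.1 _
  have hlog : -Real.log s ≤ 2 * s ^ (-(1/2) : ℝ) := by
    have h1 : Real.log (s ^ (-(1/2) : ℝ)) ≤ s ^ (-(1/2) : ℝ) - 1 :=
      Real.log_le_sub_one_of_pos hts
    rw [Real.log_rpow hs.1] at h1
    linarith
  have h3 : a * (-Real.log s) ≤ a * (2 * s ^ (-(1/2) : ℝ)) :=
    mul_le_mul_of_nonneg_left hlog ha0
  rw [Real.norm_eq_abs, abs_le]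
  constructor
  · nlinarith [abs_nonneg (gfun p a b c), le_abs_self (Real.log ((a + 1) * p 0 ^ 2)),
      neg_abs_le (Real.log ((a + 1) * p 0 ^ 2))]
  · nlinarith [le_abs_self (gfun p a b c), abs_nonneg (Real.log ((a + 1) * p 0 ^ 2)),
      mul_nonneg ha0 hts.le]

lemma gfun_intInt (ha0 : 0 ≤ a) (hb0 : 0 ≤ b) (hpc : ContinuousOn p (Icc 0 1))
    (hpa : AntitoneOn p (Icc 0 1)) (hppos : ∀ M ∈ Ico (0:ℝ) 1, 0 < p M)
    {M : ℝ} (hM : M ∈ Ico (0:ℝ) 1) : IntervalIntegrable (gfun p a b) volume 0 M := by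
  rcases eq_or_lt_of_le hM.1 with h | h
  · rw [← h]
  · exact (intervalIntegrable_iff_integrableOn_Ioc_of_le h.le).2
      (gfun_integrableOn ha0 hb0 hpc hpa hppos ⟨h, hM.2⟩)

lemma gfun_convex_int (ha0 : 0 ≤ a) (hb0 : 0 ≤ b) (hpc : ContinuousOn p (Icc 0 1))
    (hpa : AntitoneOn p (Icc 0 1)) (hppos : ∀ M ∈ Ico (0:ℝ) 1, 0 < p M)
    {M Mt : ℝ} (hM : M ∈ Ico (0:ℝ) 1) (hMt : Mt ∈ Ioo (0:ℝ) 1) :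
    gfun p a b Mt * (M - Mt) ≤
      (∫ s in (0:ℝ)..M, gfun p a b s) - ∫ s in (0:ℝ)..Mt, gfun p a b s := by
  rw [intervalIntegral.integral_interval_sub_left
    (gfun_intInt ha0 hb0 hpc hpa hppos hM)
    (gfun_intInt ha0 hb0 hpc hpa hppos ⟨hMt.1.le, hMt.2⟩)]
  rcases le_or_gt Mt M with h | h
  · have hsub : uIcc Mt M ⊆ Ioo (0:ℝ) 1 := by
      rw [uIcc_of_le h]
      exact fun s hs => ⟨lt_of_lt_of_le hMt.1 hs.1, lt_of_le_of_lt hs.2 hM.2⟩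
    have hii : IntervalIntegrable (gfun p a b) volume Mt M :=
      MonotoneOn.intervalIntegrable
        (fun x hx y hy hxy => gfun_mono ha0 hb0 hpc hpa hppos (hsub hx) (hsub hy) hxy)
    have hle := intervalIntegral.integral_mono_on h intervalIntegrable_const hii
      (fun s hs => gfun_mono ha0 hb0 hpc hpa hppos hMt
        ⟨lt_of_lt_of_le hMt.1 hs.1, lt_of_le_of_lt hs.2 hM.2⟩ hs.1)
    rw [intervalIntegral.integral_const, smul_eq_mul] at hle
    nlinarith [hle]
  · rw [intervalIntegral.integral_symm, intervalIntegral.integral_of_le h.le]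
    have hint : IntegrableOn (gfun p a b) (Ioc M Mt) volume :=
      (gfun_integrableOn ha0 hb0 hpc hpa hppos hMt).mono_set (Ioc_subset_Ioc_left hM.1)
    have hle := setIntegral_mono_on hint (integrableOn_const measure_Ioc_lt_top.ne)
      measurableSet_Ioc
      (fun s hs => gfun_mono ha0 hb0 hpc hpa hppos
        ⟨lt_of_le_of_lt hM.1 hs.1, lt_of_le_of_lt hs.2 hMt.2⟩ hMt hs.2)
    rw [setIntegral_const, measureReal_def, Real.volume_Ioc, ENNReal.toReal_ofReal (by linarith),
      smul_eq_mul] at hle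
    nlinarith [hle]

lemma xlogx_convex {x y : ℝ} (hx : 0 ≤ x) (hy : 0 < y) :
    Real.log y * (x - y) ≤ (x * (Real.log x - 1) + 1) - (y * (Real.log y - 1) + 1) := by
  rcases eq_or_lt_of_le hx with h | h
  · rw [← h]
    simp only [Real.log_zero, zero_mul, zero_sub, zero_add]
    nlinarith [hy.le]
  · have hlog : Real.log (y / x) ≤ y / x - 1 := Real.log_le_sub_one_of_pos (div_pos hy h)
    rw [Real.log_div hy.ne' h.ne'] at hlog
    have h2 : x * (Real.log y - Real.log x) ≤ x * (y / x - 1) :=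
      mul_le_mul_of_nonneg_left hlog h.le
    have h3 : x * (y / x - 1) = y - x := by field_simp
    nlinarith [h2]

lemma sqrt_log_ineq_aux {x y : ℝ} (hx : 0 < x) (hy : 0 < y) (hxy : y ≤ x) :
    (Real.sqrt x - Real.sqrt y) ^ 2 ≤ (x - y) * (Real.log x - Real.log y) := by
  have hs := Real.sq_sqrt hx.le
  have ht := Real.sq_sqrt hy.le
  have hlog : 1 - y / x ≤ Real.log x - Real.log y := by
    have h := Real.log_le_sub_one_of_pos (div_pos hy hx)
    rw [Real.log_div hy.ne' hx.ne'] at h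
    linarith
  have h1 : (x - y) * (1 - y / x) ≤ (x - y) * (Real.log x - Real.log y) :=
    mul_le_mul_of_nonneg_left hlog (by linarith)
  have h2 : (x - y) * (1 - y / x) = (x - y) ^ 2 / x := by
    field_simp
  have h3 : (Real.sqrt x - Real.sqrt y) ^ 2 ≤ (x - y) ^ 2 / x := by
    rw [le_div_iff₀ hx]
    have hst0 : 0 ≤ Real.sqrt x * Real.sqrt y :=
      mul_nonneg (Real.sqrt_nonneg x) (Real.sqrt_nonneg y)
    nlinarith [mul_nonneg (sq_nonneg (Real.sqrt x - Real.sqrt y))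
      (by nlinarith [ht, hst0] : (0:ℝ) ≤ Real.sqrt y ^ 2 + 2 * (Real.sqrt x * Real.sqrt y))]
  linarith

lemma sqrt_log_ineq {x y : ℝ} (hx : 0 < x) (hy : 0 < y) :
    (Real.sqrt x - Real.sqrt y) ^ 2 ≤ (x - y) * (Real.log x - Real.log y) := by
  rcases le_total y x with h | h
  · exact sqrt_log_ineq_aux hx hy h
  · have h1 := sqrt_log_ineq_aux hy hx h
    nlinarith [h1]

end AuxAnalysis2
section AuxDiscrete

/-- Per-cell convexity inequality for the relative entropy density. -/
lemma hstar_convex (n : ℕ) (hn : 1 ≤ n) (a b : ℝ) (ha : 1 ≤ a) (hb : 1 ≤ b)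
    (p : ℝ → ℝ) (hpc : ContinuousOn p (Icc 0 1)) (hpa : AntitoneOn p (Icc 0 1))
    (hppos : ∀ M ∈ Ico (0:ℝ) 1, 0 < p M)
    (uD : Fin n → ℝ) (huD : ∀ i, 0 < uD i) (hMD : ∑ i, uD i < 1)
    (ut u : Fin n → ℝ) (hut : ∀ i, 0 < ut i) (hut1 : ∑ i, ut i < 1)
    (hu : ∀ i, 0 ≤ u i) (hu1 : ∑ i, u i < 1) :
    hstar p a b uD ut - hstar p a b uD u ≤
      ∑ i, (Real.log (vfun p a b ut i) - Real.log (vfun p a b uD i)) * (ut i - u i) := by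
  haveI : Nonempty (Fin n) := Fin.pos_iff_nonempty.mp hn
  have ha0 : (0:ℝ) ≤ a := by linarith
  have hb0 : (0:ℝ) ≤ b := by linarith
  have hMt : (∑ i, ut i) ∈ Ioo (0:ℝ) 1 :=
    ⟨Finset.sum_pos (fun i _ => hut i) Finset.univ_nonempty, hut1⟩
  have hMu : (∑ i, u i) ∈ Ico (0:ℝ) 1 :=
    ⟨Finset.sum_nonneg (fun i _ => hu i), hu1⟩
  have hMDmem : (∑ i, uD i) ∈ Ioo (0:ℝ) 1 :=
    ⟨Finset.sum_pos (fun i _ => huD i) Finset.univ_nonempty, hMD⟩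
  have hqp : 0 < qfun p a b (∑ i, ut i) / p (∑ i, ut i) := qp_pos ha0 hb0 hpc hppos hMt
  have hvt : ∀ i, vfun p a b ut i = ut i * (qfun p a b (∑ j, ut j) / p (∑ j, ut j)) := by
    intro i
    rw [vfun, if_neg hMt.1.ne', mul_div_assoc]
  have hlogvt : ∀ i, Real.log (vfun p a b ut i)
      = Real.log (ut i) + gfun p a b (∑ j, ut j) := by
    intro i
    rw [hvt i, Real.log_mul (hut i).ne' hqp.ne']
    rfl
  -- main convexity inequality for `hent`
  have hsum : hent p a b ut - hent p a b u ≤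
      ∑ i, Real.log (vfun p a b ut i) * (ut i - u i) := by
    have e1 : ∑ i, Real.log (vfun p a b ut i) * (ut i - u i)
        = (∑ i, Real.log (ut i) * (ut i - u i))
          + gfun p a b (∑ j, ut j) * ((∑ i, ut i) - ∑ i, u i) := by
      rw [Finset.sum_congr rfl (fun i _ => by rw [hlogvt i, add_mul]),
        Finset.sum_add_distrib, ← Finset.mul_sum, Finset.sum_sub_distrib]
    have hA : ∀ i ∈ Finset.univ, (ut i * (Real.log (ut i) - 1) + 1)
        - (u i * (Real.log (u i) - 1) + 1) ≤ Real.log (ut i) * (ut i - u i) := by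
      intro i _
      have := xlogx_convex (hu i) (hut i)
      nlinarith [this]
    have hA' := Finset.sum_le_sum hA
    rw [Finset.sum_sub_distrib] at hA'
    have hB := gfun_convex_int ha0 hb0 hpc hpa hppos hMu hMt
    have hB' : (∫ s in (0:ℝ)..(∑ i, ut i), gfun p a b s)
        - (∫ s in (0:ℝ)..(∑ i, u i), gfun p a b s)
        ≤ gfun p a b (∑ j, ut j) * ((∑ i, ut i) - ∑ i, u i) := by nlinarith [hB]
    rw [hent, hent, e1]
    have hgi : ∀ (w : Fin n → ℝ), (∫ s in (0:ℝ)..(∑ i, w i), Real.log (qfun p a b s / p s))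
        = ∫ s in (0:ℝ)..(∑ i, w i), gfun p a b s := fun w => rfl
    rw [hgi ut, hgi u]
    linarith
  -- translate to `hstar`
  have hvD : ∀ i, Real.log (vfun p a b uD i)
      = Real.log (uD i * qfun p a b (∑ j, uD j) / p (∑ j, uD j)) := by
    intro i
    rw [vfun, if_neg hMDmem.1.ne']
  rw [hstar, hstar]
  have e2 : ∑ i, (Real.log (vfun p a b ut i) - Real.log (vfun p a b uD i)) * (ut i - u i)
      = (∑ i, Real.log (vfun p a b ut i) * (ut i - u i))
        - ∑ i, Real.log (uD i * qfun p a b (∑ j, uD j) / p (∑ j, uD j)) * (ut i - u i) := by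
    rw [← Finset.sum_sub_distrib]
    exact Finset.sum_congr rfl (fun i _ => by rw [hvD i]; ring)
  have e3 : (∑ i, Real.log (uD i * qfun p a b (∑ j, uD j) / p (∑ j, uD j)) * (ut i - uD i))
      - ∑ i, Real.log (uD i * qfun p a b (∑ j, uD j) / p (∑ j, uD j)) * (u i - uD i)
      = ∑ i, Real.log (uD i * qfun p a b (∑ j, uD j) / p (∑ j, uD j)) * (ut i - u i) := by
    rw [← Finset.sum_sub_distrib]
    exact Finset.sum_congr rfl (fun i _ => by ring)
  rw [e2]
  linarith [hsum, e3]

/-- Discrete summation by parts. -/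
lemma sum_by_parts {T E : Type} [Fintype T] [Fintype E] [DecidableEq T] (ends : EdgeEnds T E)
    (hends : ∀ σ K L, ends σ = Sum.inr (K, L) → K ≠ L)
    (c : E → ℝ) (vf : T → ℝ) (vD : ℝ) (zf : T → ℝ) :
    ∑ K, (∑ σ, c σ * cellDiff ends vf vD σ K) * zf K
      = -∑ σ, c σ * edgeDiff ends vf vD σ * edgeDiff ends zf 0 σ := by
  have key : ∀ σ, ∑ K, c σ * cellDiff ends vf vD σ K * zf K
      = -(c σ * edgeDiff ends vf vD σ * edgeDiff ends zf 0 σ) := by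
    intro σ
    rcases h : ends σ with K' | KL
    · simp only [cellDiff, edgeDiff, h]
      rw [Finset.sum_eq_single K']
      · rw [if_pos rfl]; ring
      · intro K _ hne
        rw [if_neg (fun hh => hne hh.symm), mul_zero, zero_mul]
      · intro hK'
        exact absurd (Finset.mem_univ K') hK'
    · obtain ⟨K', L'⟩ := KL
      have hne : K' ≠ L' := hends σ K' L' h
      simp only [cellDiff, edgeDiff, h]
      have key2 : ∀ K : T,
          c σ * (if K' = K then vf L' - vf K else if L' = K then vf K' - vf K else 0) * zf K
          = (if K' = K then c σ * (vf L' - vf K') * zf K' else 0)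
            + (if L' = K then c σ * (vf K' - vf L') * zf L' else 0) := by
        intro K
        by_cases h1 : K' = K
        · subst h1
          rw [if_pos rfl, if_pos rfl, if_neg (fun h2 => hne h2.symm)]
          ring
        · by_cases h2 : L' = K
          · subst h2
            rw [if_neg h1, if_pos rfl, if_neg h1, if_pos rfl]
            ring
          · rw [if_neg h1, if_neg h2, if_neg h1, if_neg h2]
            ring
      rw [Finset.sum_congr rfl (fun K _ => key2 K), Finset.sum_add_distrib,
        Finset.sum_ite_eq, Finset.sum_ite_eq, if_pos (Finset.mem_univ K'),
        if_pos (Finset.mem_univ L')]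
      ring
  calc ∑ K, (∑ σ, c σ * cellDiff ends vf vD σ K) * zf K
      = ∑ σ, ∑ K, c σ * cellDiff ends vf vD σ K * zf K := by
        rw [Finset.sum_congr rfl (fun K _ => Finset.sum_mul _ _ _), Finset.sum_comm]
    _ = ∑ σ, -(c σ * edgeDiff ends vf vD σ * edgeDiff ends zf 0 σ) :=
        Finset.sum_congr rfl (fun σ _ => key σ)
    _ = -∑ σ, c σ * edgeDiff ends vf vD σ * edgeDiff ends zf 0 σ :=
        Finset.sum_neg_distrib _

end AuxDiscrete
/-- Discrete entropy dissipation inequality: if `u^{k−1}` has nonnegative entries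
with total mass `< 1` on every cell and `u^k : 𝒯 → 𝒪` solves one step of the
scheme, then `H(u^k) + Δt Σᵢ Iᵢ(u^k) ≤ H(u^{k−1})`. -/
theorem scheme_entropy_dissipation (n : ℕ) (hn : 1 ≤ n) (a b : ℝ)
    (ha : 1 ≤ a) (hb : 1 ≤ b)
    (p : ℝ → ℝ) (hpc : ContinuousOn p (Icc 0 1))
    (hpa : AntitoneOn p (Icc 0 1)) (hp1 : p 1 = 0)
    (hppos : ∀ M ∈ Ico (0:ℝ) 1, 0 < p M)
    (T E : Type) [Fintype T] [Fintype E] [DecidableEq T]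
    (ends : EdgeEnds T E)
    (hends : ∀ σ K L, ends σ = Sum.inr (K, L) → K ≠ L)
    (m : T → ℝ) (hm : ∀ K, 0 < m K) (τ : E → ℝ) (hτ : ∀ σ, 0 < τ σ)
    (uD : Fin n → ℝ) (huD : ∀ i, 0 < uD i) (hMD : ∑ i, uD i < 1)
    (Δt : ℝ) (hΔt : 0 < Δt)
    (uprev : T → Fin n → ℝ) (huprev : ∀ K i, 0 ≤ uprev K i)
    (huprev1 : ∀ K, ∑ i, uprev K i < 1)
    (ucur : T → Fin n → ℝ) (hucur_pos : ∀ K i, 0 < ucur K i)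
    (hstep : SchemeStep p a b n ends m τ uD Δt uprev ucur) :
    Hent p a b m uD ucur + Δt * ∑ i, Iprod p a b ends τ uD ucur i ≤
      Hent p a b m uD uprev := by
  obtain ⟨hcnn, hclt, heq⟩ := hstep
  haveI : Nonempty (Fin n) := Fin.pos_iff_nonempty.mp hn
  have ha0 : (0:ℝ) ≤ a := by linarith
  have hb0 : (0:ℝ) ≤ b := by linarith
  have hMDI : (∑ i, uD i) ∈ Ioo (0:ℝ) 1 :=
    ⟨Finset.sum_pos (fun i _ => huD i) Finset.univ_nonempty, hMD⟩
  have hMcI : ∀ K, (∑ j, ucur K j) ∈ Ioo (0:ℝ) 1 :=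
    fun K => ⟨Finset.sum_pos (fun i _ => hucur_pos K i) Finset.univ_nonempty, hclt K⟩
  have hv_pos : ∀ (w : Fin n → ℝ), (∀ i, 0 < w i) → (∑ j, w j) ∈ Ioo (0:ℝ) 1 →
      ∀ i, 0 < vfun p a b w i := by
    intro w hw hM i
    rw [vfun, if_neg hM.1.ne']
    exact div_pos (mul_pos (hw i) (qfun_pos ha0 hb0 hpc hppos hM))
      (hppos _ ⟨hM.1.le, hM.2⟩)
  have hvD_pos : ∀ i, 0 < vfun p a b uD i := hv_pos uD huD hMDI
  have hvc_pos : ∀ K i, 0 < vfun p a b (ucur K) i :=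
    fun K => hv_pos (ucur K) (hucur_pos K) (hMcI K)
  have hc_nonneg : ∀ σ : E,
      0 ≤ τ σ * pEdgeSq p ends (fun L => ∑ j, ucur L j) (∑ j, uD j) σ := by
    intro σ
    apply mul_nonneg (hτ σ).le
    rcases h : ends σ with K | KL <;> simp only [pEdgeSq, h] <;> positivity
  -- Step A : convexity
  have stepA : Hent p a b m uD ucur - Hent p a b m uD uprev ≤
      ∑ K, m K * ∑ i, (Real.log (vfun p a b (ucur K) i) - Real.log (vfun p a b uD i))
        * (ucur K i - uprev K i) := by
    rw [Hent, Hent, ← Finset.sum_sub_distrib]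
    refine Finset.sum_le_sum (fun K _ => ?_)
    rw [← mul_sub]
    exact mul_le_mul_of_nonneg_left
      (hstar_convex n hn a b ha hb p hpc hpa hppos uD huD hMD (ucur K) (uprev K)
        (hucur_pos K) (hclt K) (huprev K) (huprev1 K)) (hm K).le
  -- scheme rewrite
  have hsch : ∀ K i, m K * (ucur K i - uprev K i)
      = Δt * ∑ σ, τ σ * pEdgeSq p ends (fun L => ∑ j, ucur L j) (∑ j, uD j) σ *
          cellDiff ends (fun L => vfun p a b (ucur L) i) (vfun p a b uD i) σ K := by
    intro K i
    have h := heq K i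
    rw [div_eq_iff hΔt.ne'] at h
    rw [h, mul_comm]
  -- Step B : substitute the scheme and reorder sums
  have stepB : ∑ K, m K * ∑ i, (Real.log (vfun p a b (ucur K) i)
        - Real.log (vfun p a b uD i)) * (ucur K i - uprev K i)
      = Δt * ∑ i, ∑ K, (∑ σ, τ σ * pEdgeSq p ends (fun L => ∑ j, ucur L j) (∑ j, uD j) σ *
          cellDiff ends (fun L => vfun p a b (ucur L) i) (vfun p a b uD i) σ K) *
          (Real.log (vfun p a b (ucur K) i) - Real.log (vfun p a b uD i)) := by
    calc ∑ K, m K * ∑ i, (Real.log (vfun p a b (ucur K) i)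
          - Real.log (vfun p a b uD i)) * (ucur K i - uprev K i)
        = ∑ K, ∑ i, (m K * (ucur K i - uprev K i)) *
            (Real.log (vfun p a b (ucur K) i) - Real.log (vfun p a b uD i)) := by
          refine Finset.sum_congr rfl (fun K _ => ?_)
          rw [Finset.mul_sum]
          exact Finset.sum_congr rfl (fun i _ => by ring)
      _ = ∑ K, ∑ i, (Δt * ∑ σ, τ σ * pEdgeSq p ends (fun L => ∑ j, ucur L j) (∑ j, uD j) σ *
            cellDiff ends (fun L => vfun p a b (ucur L) i) (vfun p a b uD i) σ K) *
            (Real.log (vfun p a b (ucur K) i) - Real.log (vfun p a b uD i)) := by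
          refine Finset.sum_congr rfl (fun K _ => Finset.sum_congr rfl (fun i _ => ?_))
          rw [hsch K i]
      _ = Δt * ∑ i, ∑ K, (∑ σ, τ σ * pEdgeSq p ends (fun L => ∑ j, ucur L j) (∑ j, uD j) σ *
            cellDiff ends (fun L => vfun p a b (ucur L) i) (vfun p a b uD i) σ K) *
            (Real.log (vfun p a b (ucur K) i) - Real.log (vfun p a b uD i)) := by
          rw [Finset.sum_comm, Finset.mul_sum]
          refine Finset.sum_congr rfl (fun i _ => ?_)
          rw [Finset.mul_sum]
          exact Finset.sum_congr rfl (fun K _ => by ring)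
  -- Step C : summation by parts
  have stepC : ∀ i, ∑ K, (∑ σ, τ σ * pEdgeSq p ends (fun L => ∑ j, ucur L j) (∑ j, uD j) σ *
        cellDiff ends (fun L => vfun p a b (ucur L) i) (vfun p a b uD i) σ K) *
        (Real.log (vfun p a b (ucur K) i) - Real.log (vfun p a b uD i))
      = -∑ σ, (τ σ * pEdgeSq p ends (fun L => ∑ j, ucur L j) (∑ j, uD j) σ) *
          edgeDiff ends (fun L => vfun p a b (ucur L) i) (vfun p a b uD i) σ *
          edgeDiff ends (fun K => Real.log (vfun p a b (ucur K) i)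
            - Real.log (vfun p a b uD i)) 0 σ := by
    intro i
    exact sum_by_parts ends hends
      (fun σ => τ σ * pEdgeSq p ends (fun L => ∑ j, ucur L j) (∑ j, uD j) σ)
      (fun L => vfun p a b (ucur L) i) (vfun p a b uD i)
      (fun K => Real.log (vfun p a b (ucur K) i) - Real.log (vfun p a b uD i))
  -- Step D : per-edge entropy production estimate
  have stepD : ∀ i, Iprod p a b ends τ uD ucur i ≤
      ∑ σ, (τ σ * pEdgeSq p ends (fun L => ∑ j, ucur L j) (∑ j, uD j) σ) *
        edgeDiff ends (fun L => vfun p a b (ucur L) i) (vfun p a b uD i) σ *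
        edgeDiff ends (fun K => Real.log (vfun p a b (ucur K) i)
          - Real.log (vfun p a b uD i)) 0 σ := by
    intro i
    rw [Iprod]
    refine Finset.sum_le_sum (fun σ _ => ?_)
    have h1 : (edgeDiff ends (fun L => Real.sqrt (vfun p a b (ucur L) i))
          (Real.sqrt (vfun p a b uD i)) σ) ^ 2 ≤
        edgeDiff ends (fun L => vfun p a b (ucur L) i) (vfun p a b uD i) σ *
        edgeDiff ends (fun K => Real.log (vfun p a b (ucur K) i)
          - Real.log (vfun p a b uD i)) 0 σ := by
      rcases h : ends σ with K | KL <;> simp only [edgeDiff, h]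
      · have := sqrt_log_ineq (hvD_pos i) (hvc_pos K i)
        nlinarith [this]
      · have := sqrt_log_ineq (hvc_pos KL.2 i) (hvc_pos KL.1 i)
        nlinarith [this]
    calc τ σ * pEdgeSq p ends (fun L => ∑ j, ucur L j) (∑ j, uD j) σ *
          (edgeDiff ends (fun L => Real.sqrt (vfun p a b (ucur L) i))
            (Real.sqrt (vfun p a b uD i)) σ) ^ 2
        ≤ τ σ * pEdgeSq p ends (fun L => ∑ j, ucur L j) (∑ j, uD j) σ *
          (edgeDiff ends (fun L => vfun p a b (ucur L) i) (vfun p a b uD i) σ *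
          edgeDiff ends (fun K => Real.log (vfun p a b (ucur K) i)
            - Real.log (vfun p a b uD i)) 0 σ) :=
          mul_le_mul_of_nonneg_left h1 (hc_nonneg σ)
      _ = τ σ * pEdgeSq p ends (fun L => ∑ j, ucur L j) (∑ j, uD j) σ *
          edgeDiff ends (fun L => vfun p a b (ucur L) i) (vfun p a b uD i) σ *
          edgeDiff ends (fun K => Real.log (vfun p a b (ucur K) i)
            - Real.log (vfun p a b uD i)) 0 σ := by ring
  -- combine everything
  have hIle : ∑ i, Iprod p a b ends τ uD ucur i ≤
      ∑ i, ∑ σ, (τ σ * pEdgeSq p ends (fun L => ∑ j, ucur L j) (∑ j, uD j) σ) *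
        edgeDiff ends (fun L => vfun p a b (ucur L) i) (vfun p a b uD i) σ *
        edgeDiff ends (fun K => Real.log (vfun p a b (ucur K) i)
          - Real.log (vfun p a b uD i)) 0 σ :=
    Finset.sum_le_sum (fun i _ => stepD i)
  have hfin : Hent p a b m uD ucur - Hent p a b m uD uprev ≤
      -(Δt * ∑ i, ∑ σ, (τ σ * pEdgeSq p ends (fun L => ∑ j, ucur L j) (∑ j, uD j) σ) *
        edgeDiff ends (fun L => vfun p a b (ucur L) i) (vfun p a b uD i) σ *
        edgeDiff ends (fun K => Real.log (vfun p a b (ucur K) i)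
          - Real.log (vfun p a b uD i)) 0 σ) := by
    have e4 : ∑ i, ∑ K, (∑ σ, τ σ * pEdgeSq p ends (fun L => ∑ j, ucur L j) (∑ j, uD j) σ *
          cellDiff ends (fun L => vfun p a b (ucur L) i) (vfun p a b uD i) σ K) *
          (Real.log (vfun p a b (ucur K) i) - Real.log (vfun p a b uD i))
        = -∑ i, ∑ σ, (τ σ * pEdgeSq p ends (fun L => ∑ j, ucur L j) (∑ j, uD j) σ) *
            edgeDiff ends (fun L => vfun p a b (ucur L) i) (vfun p a b uD i) σ *
            edgeDiff ends (fun K => Real.log (vfun p a b (ucur K) i)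
              - Real.log (vfun p a b uD i)) 0 σ := by
      rw [← Finset.sum_neg_distrib]
      exact Finset.sum_congr rfl (fun i _ => stepC i)
    calc Hent p a b m uD ucur - Hent p a b m uD uprev
        ≤ ∑ K, m K * ∑ i, (Real.log (vfun p a b (ucur K) i) - Real.log (vfun p a b uD i))
            * (ucur K i - uprev K i) := stepA
      _ = Δt * ∑ i, ∑ K, (∑ σ, τ σ * pEdgeSq p ends (fun L => ∑ j, ucur L j) (∑ j, uD j) σ *
            cellDiff ends (fun L => vfun p a b (ucur L) i) (vfun p a b uD i) σ K) *
            (Real.log (vfun p a b (ucur K) i) - Real.log (vfun p a b uD i)) := stepB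
      _ = -(Δt * ∑ i, ∑ σ, (τ σ * pEdgeSq p ends (fun L => ∑ j, ucur L j) (∑ j, uD j) σ) *
            edgeDiff ends (fun L => vfun p a b (ucur L) i) (vfun p a b uD i) σ *
            edgeDiff ends (fun K => Real.log (vfun p a b (ucur K) i)
              - Real.log (vfun p a b uD i)) 0 σ) := by rw [e4, mul_neg]
  have hmul := mul_le_mul_of_nonneg_left hIle hΔt.le
  linarith
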